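/- For every natural number n ≥ 1, every finite sequence x_0, ..., x_{q−1} of positive rational numbers, and every sequence of natural numbers m_0, ..., m_{q−1} with each m_j > 1 and m_j not dividing n, there exists a positive rational number y such that for every j < q, the rational number y^n·x_j is not an m_j-th power. -/

import Mathlib

/-- There is a positive rational `y` such that none of the `y ^ n * x j` is an
`m j`-th power, provided each `m j > 1` does not divide `n`. -/
theorem exists_pow_mul_not_pow (n : ℕ) (hn : 1 ≤ n) (q : ℕ) (x : Fin q → ℚ)
    (hx : ∀ j, 0 < x j) (m : Fin q → ℕ) (hm : ∀ j, 1 < m j) (hmn : ∀ j, ¬ m j ∣ n) :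
    ∃ y : ℚ, 0 < y ∧ ∀ j, ¬ ∃ w : ℚ, y ^ n * x j = w ^ m j := by
  classical
  set P : ℕ := ∏ j : Fin q, (x j).num.natAbs * (x j).den with hPdef
  have hPpos : 0 < P := Finset.prod_pos fun j _ =>
    Nat.mul_pos (Int.natAbs_pos.2 (ne_of_gt (Rat.num_pos.2 (hx j)))) (x j).pos
  set p : ℕ := (P + 1).minFac with hpdef
  have hp : p.Prime := Nat.minFac_prime (by omega)
  haveI : Fact p.Prime := ⟨hp⟩
  have hpP : ¬ p ∣ P := by
    intro h
    have h1 : p ∣ P + 1 := Nat.minFac_dvd _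
    have : p ∣ 1 := (Nat.dvd_add_right h).mp h1
    exact Nat.Prime.one_lt hp |>.ne' (Nat.dvd_one.mp this)
  have hppos : (0 : ℚ) < (p : ℚ) := by exact_mod_cast hp.pos
  refine ⟨(p : ℚ), hppos, fun j ⟨w, hw⟩ => ?_⟩
  have hxj := hx j
  have hxne : x j ≠ 0 := ne_of_gt hxj
  have hpne : (p : ℚ) ≠ 0 := ne_of_gt hppos
  have hwne : w ≠ 0 := by
    intro h0
    rw [h0, zero_pow (Nat.lt_of_lt_of_le Nat.zero_lt_one (le_of_lt (hm j))).ne'] at hw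
    exact (mul_pos (pow_pos hppos n) hxj).ne' hw
  -- p-adic valuation of x j is 0
  have hdvdP : (x j).num.natAbs * (x j).den ∣ P :=
    Finset.dvd_prod_of_mem _ (Finset.mem_univ j)
  have hnum : ¬ p ∣ (x j).num.natAbs := fun h => hpP (h.trans ((dvd_mul_right _ _).trans hdvdP))
  have hden : ¬ p ∣ (x j).den := fun h => hpP (h.trans ((dvd_mul_left _ _).trans hdvdP))
  have hvalx : padicValRat p (x j) = 0 := by
    unfold padicValRat
    rw [padicValInt.eq_zero_of_not_dvd (by rwa [Int.natCast_dvd] ),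
      padicValNat.eq_zero_of_not_dvd hden]
    simp
  have hval : padicValRat p ((p : ℚ) ^ n * x j) = n := by
    rw [padicValRat.mul (pow_ne_zero _ hpne) hxne, padicValRat.pow (p : ℚ),
      padicValRat.self hp.one_lt, hvalx, mul_one, add_zero]
  rw [hw, padicValRat.pow w] at hval
  refine hmn j ?_
  have : ((m j : ℤ)) ∣ (n : ℤ) := ⟨padicValRat p w, hval.symm⟩
  exact_mod_cast this
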